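/- For m > 0 and ℓ > 0 with ℓ < 2m, the surface gravity of the Simpson–Visser spacetime, κ = (1/2)f'(r_H) evaluated at r_H = √((2m)²-ℓ²) where f(r) = 1 - 2m/√(r²+ℓ²), equals √((2m)²-ℓ²)/(8m²). -/

import Mathlib

/-- The surface gravity `κ = f'(r_H)/2` of the Simpson–Visser spacetime,
with `f r = 1 - 2m/√(r²+ℓ²)` and `r_H = √((2m)²-ℓ²)`, equals `√((2m)²-ℓ²)/(8m²)`. -/
theorem sv_surface_gravity (m ℓ : ℝ) (hm : 0 < m) (hℓ : 0 < ℓ) (h : ℓ < 2*m) :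
    (1/2) * deriv (fun r : ℝ => 1 - 2*m / Real.sqrt (r^2 + ℓ^2))
        (Real.sqrt ((2*m)^2 - ℓ^2))
      = Real.sqrt ((2*m)^2 - ℓ^2) / (8*m^2) := by
  set rH := Real.sqrt ((2*m)^2 - ℓ^2) with hrH
  have hpos : 0 < (2*m)^2 - ℓ^2 := by nlinarith
  have hr2 : rH^2 = (2*m)^2 - ℓ^2 := Real.sq_sqrt hpos.le
  have hsum : rH^2 + ℓ^2 = (2*m)^2 := by rw [hr2]; ring
  have hs : Real.sqrt (rH^2 + ℓ^2) = 2*m := by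
    rw [hsum, Real.sqrt_sq (by linarith)]
  have h1 : HasDerivAt (fun r : ℝ => r^2 + ℓ^2) (2*rH) rH := by
    simpa using (hasDerivAt_pow 2 rH).add_const (ℓ^2)
  have hne : rH^2 + ℓ^2 ≠ 0 := by rw [hsum]; positivity
  have h2 : HasDerivAt (fun r : ℝ => Real.sqrt (r^2 + ℓ^2))
      (2*rH / (2 * Real.sqrt (rH^2 + ℓ^2))) rH := by
    have := (Real.hasDerivAt_sqrt hne).comp rH h1
    simpa [Function.comp_def, div_eq_mul_inv, mul_comm] using this
  have hsne : Real.sqrt (rH^2 + ℓ^2) ≠ 0 := by rw [hs]; positivity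
  have h3 : HasDerivAt (fun r : ℝ => 1 - 2*m / Real.sqrt (r^2 + ℓ^2))
      (-( (0 * Real.sqrt (rH^2 + ℓ^2) - (2*m) * (2*rH / (2 * Real.sqrt (rH^2 + ℓ^2)))) /
        (Real.sqrt (rH^2 + ℓ^2))^2)) rH :=
    (((hasDerivAt_const rH (2*m)).div h2 hsne)).const_sub 1
  rw [h3.deriv, hs]
  field_simp
  ring
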